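/- In the setting of non-preemptive FIFO schedules of unit-weight jobs indexed 1,...,n by nondecreasing release time (completing in index order), let σ and σ' be two schedules and j_1 < j_2 two jobs. If in σ the affection chains of j_1 and j_2 coincide (j_1 and j_2 belong to the same maximal affection chain), then κ_{j_1}(σ) − κ_{j_1}(σ') ≥ κ_{j_2}(σ) − κ_{j_2}(σ'), where κ_j denotes the cardinality of the affection set of j. -/

import Mathlib

/-- `j` affects `j'`: transitive closure of `C j ≤ C j' ∧ r j' < C j`. -/
def affects {n : ℕ} (r C : Fin n → ℝ) (j j' : Fin n) : Prop :=
  Relation.TransGen (fun a b => C a ≤ C b ∧ r b < C a) j j'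

/-- `κ_j`: the cardinality of the affection set of `j` (which contains `j`). -/
noncomputable def kappa {n : ℕ} (r C : Fin n → ℝ) (j : Fin n) : ℕ :=
  (insert j {j' | affects r C j j'}).ncard

section Aux

variable {n : ℕ} {r x S C : Fin n → ℝ}

lemma completion_strictMono (hx : ∀ j, 0 < x j) (hC : ∀ j, C j = S j + x j)
    (hseq : ∀ j : Fin n, ∀ h : (j : ℕ) + 1 < n, C j ≤ S ⟨(j : ℕ) + 1, h⟩) :
    StrictMono C := by
  have step : ∀ a : Fin n, ∀ h : (a : ℕ) + 1 < n, C a < C ⟨(a : ℕ) + 1, h⟩ := by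
    intro a h
    have h1 := hseq a h
    have h2 := hx ⟨(a : ℕ) + 1, h⟩
    have h3 := hC ⟨(a : ℕ) + 1, h⟩
    linarith
  intro a b hab
  suffices h : ∀ k, ∀ b : Fin n, (b : ℕ) = (a : ℕ) + k + 1 → C a < C b by
    exact h ((b : ℕ) - (a : ℕ) - 1) b (by have := Fin.lt_iff_val_lt_val.mp hab; omega)
  intro k
  induction k with
  | zero =>
      intro b hb
      have hb1 : (a : ℕ) + 1 < n := by have := b.isLt; omega
      have hbe : b = ⟨(a : ℕ) + 1, hb1⟩ := Fin.ext (by simpa using hb)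
      rw [hbe]; exact step a hb1
  | succ k ih =>
      intro b hb
      have hb' : (a : ℕ) + k + 1 < n := by have := b.isLt; omega
      have h1 : C a < C ⟨(a : ℕ) + k + 1, hb'⟩ := ih _ rfl
      have hb2 : ((⟨(a : ℕ) + k + 1, hb'⟩ : Fin n) : ℕ) + 1 < n := by
        simp only [Fin.val_mk]; have := b.isLt; omega
      have h2 := step ⟨(a : ℕ) + k + 1, hb'⟩ hb2
      have hbe : b = ⟨((⟨(a : ℕ) + k + 1, hb'⟩ : Fin n) : ℕ) + 1, hb2⟩ :=
        Fin.ext (by simp only [Fin.val_mk] at hb ⊢; omega)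
      rw [hbe]; linarith

lemma affects_self (hx : ∀ j, 0 < x j) (hrS : ∀ j, r j ≤ S j)
    (hC : ∀ j, C j = S j + x j) (j : Fin n) : affects r C j j :=
  Relation.TransGen.single ⟨le_refl _, by have := hx j; have := hrS j; rw [hC]; linarith⟩

lemma affects_le (hCm : StrictMono C) {j j' : Fin n} (h : affects r C j j') :
    j ≤ j' := by
  induction h with
  | single h => exact hCm.le_iff_le.mp h.1
  | tail _ h ih => exact le_trans ih (hCm.le_iff_le.mp h.1)

/-- if `j1` affects `k` and `j1 ≤ j2 ≤ k`, then `j2` affects `k`. -/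
lemma affects_cut (hCm : StrictMono C) {j1 j2 k : Fin n}
    (h : affects r C j1 k) (h12 : j1 ≤ j2) (h2k : j2 ≤ k) : affects r C j2 k := by
  revert h12
  induction h using Relation.TransGen.head_induction_on with
  | single hd =>
      intro h12
      exact Relation.TransGen.single
        ⟨hCm.monotone h2k, lt_of_lt_of_le hd.2 (hCm.monotone h12)⟩
  | head h' h ihp =>
      intro h12
      rcases le_or_gt ‹Fin n› j2 with hc | hc
      · exact ihp hc
      · exact h.head ⟨hCm.monotone hc.le, lt_of_lt_of_le h'.2 (hCm.monotone h12)⟩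

/-- affection sets are intervals: if `j1` affects `j2` and `j1 ≤ c ≤ j2`,
then `j1` affects `c`. -/
lemma affects_interval (hr : Monotone r) (hCm : StrictMono C) {j1 c j2 : Fin n}
    (h : affects r C j1 j2) (h1c : j1 ≤ c) (hc2 : c ≤ j2) : affects r C j1 c := by
  revert h1c
  induction h using Relation.TransGen.head_induction_on with
  | single hd =>
      intro h1c
      exact Relation.TransGen.single
        ⟨hCm.monotone h1c, lt_of_le_of_lt (hr hc2) hd.2⟩
  | head h' h ihp =>
      intro h1c
      rcases le_or_gt c ‹Fin n› with hc | hc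
      · exact Relation.TransGen.single
          ⟨hCm.monotone h1c, lt_of_le_of_lt (hr hc) h'.2⟩
      · exact (ihp hc.le).head h'

end Aux

/-- for two non-preemptive FIFO schedules `σ` (given by `x, S, C`)
and `σ'` (given by `x', S', C'`) of the same unit-weight jobs, if `j₁ < j₂`
belong to the same maximal affection chain of `σ` (equivalently, `j₁` affects
`j₂` in `σ`), then `κ_{j₁}(σ) − κ_{j₁}(σ') ≥ κ_{j₂}(σ) − κ_{j₂}(σ')`. -/
theorem stmt_10 (n : ℕ) (r : Fin n → ℝ) (hr : Monotone r)
    (x S C x' S' C' : Fin n → ℝ)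
    (hx : ∀ j, 0 < x j) (hrS : ∀ j, r j ≤ S j) (hC : ∀ j, C j = S j + x j)
    (hseq : ∀ j : Fin n, ∀ h : (j : ℕ) + 1 < n, C j ≤ S ⟨(j : ℕ) + 1, h⟩)
    (hx' : ∀ j, 0 < x' j) (hrS' : ∀ j, r j ≤ S' j) (hC' : ∀ j, C' j = S' j + x' j)
    (hseq' : ∀ j : Fin n, ∀ h : (j : ℕ) + 1 < n, C' j ≤ S' ⟨(j : ℕ) + 1, h⟩)
    (j1 j2 : Fin n) (hlt : j1 < j2)
    (hchain : affects r C j1 j2) :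
    (kappa r C j1 : ℤ) - (kappa r C' j1 : ℤ)
      ≥ (kappa r C j2 : ℤ) - (kappa r C' j2 : ℤ) := by
  have hCm : StrictMono C := completion_strictMono hx hC hseq
  have hCm' : StrictMono C' := completion_strictMono hx' hC' hseq'
  -- kappa is just the ncard of the affection set (which contains j)
  have hk : ∀ j, kappa r C j = {j' | affects r C j j'}.ncard := by
    intro j
    have hm : j ∈ {j' | affects r C j j'} := affects_self hx hrS hC j
    rw [kappa, Set.insert_eq_self.mpr hm]
  have hk' : ∀ j, kappa r C' j = {j' | affects r C' j j'}.ncard := by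
    intro j
    have hm : j ∈ {j' | affects r C' j j'} := affects_self hx' hrS' hC' j
    rw [kappa, Set.insert_eq_self.mpr hm]
  have hIco : (Set.Ico j1 j2).ncard = (j2 : ℕ) - (j1 : ℕ) := by
    rw [← Finset.coe_Ico, Set.ncard_coe_finset, Fin.card_Ico]
  -- In σ: the affection set of j1 is Ico j1 j2 ∪ affection set of j2, disjointly
  have hsetσ : {j' | affects r C j1 j'} = Set.Ico j1 j2 ∪ {j' | affects r C j2 j'} := by
    ext k
    simp only [Set.mem_setOf_eq, Set.mem_union, Set.mem_Ico]
    constructor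
    · intro h
      rcases lt_or_ge k j2 with hlt2 | hle2
      · exact Or.inl ⟨affects_le hCm h, hlt2⟩
      · exact Or.inr (affects_cut hCm h hlt.le hle2)
    · rintro (⟨h1, h2⟩ | h)
      · exact affects_interval hr hCm hchain h1 h2.le
      · exact hchain.trans h
  have hdisj : Disjoint (Set.Ico j1 j2) {j' | affects r C j2 j'} := by
    rw [Set.disjoint_left]
    rintro k ⟨_, hk2⟩ hk3
    exact absurd (affects_le hCm hk3) (not_le.mpr hk2)
  have hκ1 : kappa r C j1 = ((j2 : ℕ) - (j1 : ℕ)) + kappa r C j2 := by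
    rw [hk, hk, hsetσ, Set.ncard_union_eq hdisj (Set.toFinite _) (Set.toFinite _), hIco]
  -- In σ': the affection set of j1 is contained in Ico j1 j2 ∪ affection set of j2
  have hsubσ' : {j' | affects r C' j1 j'} ⊆ Set.Ico j1 j2 ∪ {j' | affects r C' j2 j'} := by
    intro k h
    simp only [Set.mem_setOf_eq] at h
    simp only [Set.mem_union, Set.mem_Ico]
    rcases lt_or_ge k j2 with hlt2 | hle2
    · exact Or.inl ⟨affects_le hCm' h, hlt2⟩
    · exact Or.inr (affects_cut hCm' h hlt.le hle2)
  have hκ1' : kappa r C' j1 ≤ ((j2 : ℕ) - (j1 : ℕ)) + kappa r C' j2 := by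
    rw [hk', hk']
    calc {j' | affects r C' j1 j'}.ncard
        ≤ (Set.Ico j1 j2 ∪ {j' | affects r C' j2 j'}).ncard :=
          Set.ncard_le_ncard hsubσ' (Set.toFinite _)
      _ ≤ (Set.Ico j1 j2).ncard + {j' | affects r C' j2 j'}.ncard :=
          Set.ncard_union_le _ _
      _ = ((j2 : ℕ) - (j1 : ℕ)) + {j' | affects r C' j2 j'}.ncard := by rw [hIco]
  omega
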